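/- Let G be a locally compact Hausdorff topological group, let (Γₙ) be a uniformly discrete sequence of cocompact lattices in G, and let Γ_∞ be a subgroup of G that is a normal subgroup of Γₙ for every n. Then the following are equivalent: (a) (Γₙ) BS-converges to Γ_∞, i.e., for every compact set C ⊆ G, P_{Γₙ\G}({x ∈ Γₙ\G : x⁻¹(Γₙ ∖ Γ_∞)x ∩ C ≠ ∅}) → 0 as n → ∞; (b) (Γₙ) Plancherel-converges to Γ_∞, i.e., for every compact set C ⊆ G, ∫_{Γₙ\G} #(x⁻¹(Γₙ ∖ Γ_∞)x ∩ C) dP_{Γₙ\G}(x) → 0 as n → ∞. -/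

import Mathlib

open MeasureTheory Filter Topology
open scoped ENNReal
open scoped Pointwise

section Aux

variable {G : Type*} [Group G]

/-- Conjugation by an element of `Γn` preserves `Γn \ Γinf` when `Γinf` is normal in `Γn`. -/
lemma conj_mem_diff (Γn Γinf : Subgroup G)
    (hnorm : ∀ γ ∈ Γn, ∀ δ ∈ Γinf, γ * δ * γ⁻¹ ∈ Γinf)
    {γ s : G} (hγ : γ ∈ Γn) (hs : s ∈ (Γn : Set G) \ (Γinf : Set G)) :
    γ⁻¹ * s * γ ∈ (Γn : Set G) \ (Γinf : Set G) := by
  refine ⟨mul_mem (mul_mem (inv_mem hγ) hs.1) hγ, fun hmem => hs.2 ?_⟩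
  have h := hnorm γ hγ _ hmem
  have e : γ * (γ⁻¹ * s * γ) * γ⁻¹ = s := by group
  rwa [e] at h

lemma conj_image_eq (Γn Γinf : Subgroup G)
    (hnorm : ∀ γ ∈ Γn, ∀ δ ∈ Γinf, γ * δ * γ⁻¹ ∈ Γinf)
    {γ : G} (hγ : γ ∈ Γn) (x : G) :
    (fun g => (γ * x)⁻¹ * g * (γ * x)) '' ((Γn : Set G) \ (Γinf : Set G))
      = (fun g => x⁻¹ * g * x) '' ((Γn : Set G) \ (Γinf : Set G)) := by
  ext z
  constructor
  · rintro ⟨s, hs, rfl⟩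
    refine ⟨γ⁻¹ * s * γ, conj_mem_diff Γn Γinf hnorm hγ hs, by group⟩
  · rintro ⟨s, hs, rfl⟩
    refine ⟨γ * s * γ⁻¹, ?_, by group⟩
    have := conj_mem_diff Γn Γinf hnorm (inv_mem hγ) hs
    simpa using this
variable {G : Type*} [Group G] [TopologicalSpace G] [IsTopologicalGroup G]

/-- Uniform bound on the number of `U`-uniformly-discrete conjugates in a compact set. -/
lemma count_bound (Γ : ℕ → Subgroup G) (S : ℕ → Set G) (hS : ∀ n, S n ⊆ (Γ n : Set G))
    {U : Set G} (hU : U ∈ 𝓝 (1 : G))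
    (hunif : ∀ (n : ℕ) (x : G), ((fun γ => x⁻¹ * γ * x) '' ((Γ n : Set G))) ∩ U = {1})
    {C : Set G} (hC : IsCompact C) :
    ∃ K : ℕ, ∀ (n : ℕ) (x : G),
      (((fun γ => x⁻¹ * γ * x) '' S n) ∩ C).encard ≤ (K : ℕ∞) := by
  classical
  obtain ⟨V₀, hV₀open, hV₀one, hV₀U⟩ := exists_open_nhds_one_mul_subset hU
  set V : Set G := V₀ ∩ V₀⁻¹ with hV
  have hVopen : IsOpen V := hV₀open.inter hV₀open.inv
  have hVone : (1 : G) ∈ V := ⟨hV₀one, by simpa using hV₀one⟩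
  have hVmul : ∀ a ∈ V, ∀ b ∈ V, a * b⁻¹ ∈ U := by
    intro a ha b hb
    exact hV₀U (Set.mul_mem_mul ha.1 hb.2)
  -- cover C by finitely many sets W c := {y | y * c⁻¹ ∈ V}
  let W : G → Set G := fun c => (fun y => y * c⁻¹) ⁻¹' V
  have hWopen : ∀ c, IsOpen (W c) := fun c =>
    hVopen.preimage (continuous_id.mul continuous_const)
  have hcover : C ⊆ ⋃ c : C, W c := by
    intro y hy
    exact Set.mem_iUnion.2 ⟨⟨y, hy⟩, by simpa [W] using hVone⟩
  obtain ⟨t, ht⟩ := hC.elim_finite_subcover (fun c : C => W c) (fun c => hWopen c) hcover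
  let T : Finset G := t.image (fun c : ↥C => (c : G))
  refine ⟨T.card, fun n x => ?_⟩
  set D : Set G := ((fun γ => x⁻¹ * γ * x) '' S n) ∩ C with hD
  have key : ∀ d ∈ D, ∃ c ∈ T, d ∈ W c := by
    intro d hd
    have h2 := ht hd.2
    simp only [Set.mem_iUnion] at h2
    obtain ⟨c, hc, hcW⟩ := h2
    refine ⟨(c : G), ?_, hcW⟩
    have : (c : G) ∈ t.image (fun c : ↥C => (c : G)) := Finset.mem_image_of_mem _ hc
    exact this
  choose! g hg1 hg2 using key
  have hinj : Set.InjOn g D := by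
    intro a ha b hb hab
    have hau : a ∈ W (g a) := hg2 a ha
    have hbu : b ∈ W (g a) := hab ▸ hg2 b hb
    have hU1 : a * b⁻¹ ∈ U := by
      have := hVmul _ hau _ hbu
      have e : a * (g a)⁻¹ * (b * (g a)⁻¹)⁻¹ = a * b⁻¹ := by group
      rwa [e] at this
    obtain ⟨γa, hγa, rfl⟩ := ha.1
    obtain ⟨γb, hγb, rfl⟩ := hb.1
    have hmem : (x⁻¹ * γa * x) * (x⁻¹ * γb * x)⁻¹
        ∈ ((fun γ => x⁻¹ * γ * x) '' ((Γ n : Set G))) ∩ U := by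
      refine ⟨⟨γa * γb⁻¹, mul_mem (hS n hγa) (inv_mem (hS n hγb)), by group⟩, hU1⟩
    rw [hunif n x] at hmem
    have : x⁻¹ * γa * x = x⁻¹ * γb * x := by
      have := Set.mem_singleton_iff.1 hmem
      exact mul_inv_eq_one.1 this
    exact this
  calc D.encard = (g '' D).encard := (hinj.encard_image).symm
    _ ≤ ((T : Set G)).encard := Set.encard_le_encard (by rintro _ ⟨d, hd, rfl⟩; exact hg1 d hd)
    _ = (T.card : ℕ∞) := Set.encard_coe_eq_coe_finsetCard T
variable {G : Type*} [Group G] [TopologicalSpace G] [IsTopologicalGroup G]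

lemma closed_bad [T2Space G] [LocallyCompactSpace G]
    (Γn : Subgroup G) (hd : DiscreteTopology ↥Γn) (S : Set G) (hS : S ⊆ (Γn : Set G))
    {C : Set G} (hC : IsCompact C) :
    IsClosed {x : G | (((fun γ => x⁻¹ * γ * x) '' S) ∩ C).Nonempty} := by
  classical
  rw [← isOpen_compl_iff]
  rw [isOpen_iff_mem_nhds]
  intro x hx
  simp only [Set.mem_compl_iff, Set.mem_setOf_eq, Set.not_nonempty_iff_eq_empty] at hx
  -- compact neighborhood of x
  obtain ⟨V, hVcpt, hVnhds⟩ := exists_compact_mem_nhds x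
  have hK' : IsCompact (V * C * V⁻¹) := (hVcpt.mul hC).mul hVcpt.inv
  -- Γn is closed and discrete, so S ∩ (V * C * V⁻¹) is finite
  have hΓclosed : IsClosed (Γn : Set G) := Subgroup.isClosed_of_discrete
  have hfin : (S ∩ (V * C * V⁻¹)).Finite := by
    have h1 : IsCompact ((Γn : Set G) ∩ (V * C * V⁻¹)) := hK'.inter_left hΓclosed
    have h2 : DiscreteTopology ((Γn : Set G) ∩ (V * C * V⁻¹) : Set G) := by
      have : DiscreteTopology ((Γn : Set G) : Set G) := hd
      exact DiscreteTopology.of_subset this Set.inter_subset_left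
    exact (h1.finite (isDiscrete_iff_discreteTopology.2 h2)).subset (Set.inter_subset_inter_left _ hS)
  -- for each γ in that finite set, the condition x⁻¹ γ x ∉ C is open in x
  set T : Set G := S ∩ (V * C * V⁻¹) with hT
  have hO : ∀ γ : G, IsOpen {y : G | y⁻¹ * γ * y ∉ C} := by
    intro γ
    have hcont : Continuous fun y : G => y⁻¹ * γ * y := by continuity
    exact (hC.isClosed.preimage hcont).isOpen_compl
  have hxO : ∀ γ ∈ T, x ∈ {y : G | y⁻¹ * γ * y ∉ C} := by
    intro γ hγ hmem
    have : x⁻¹ * γ * x ∈ ((fun γ => x⁻¹ * γ * x) '' S) ∩ C := ⟨⟨γ, hγ.1, rfl⟩, hmem⟩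
    rw [hx] at this
    exact this
  refine Filter.mem_of_superset (Filter.inter_mem hVnhds
      ((hfin.isOpen_biInter (fun γ _ => hO γ)).mem_nhds (by
        simp only [Set.mem_iInter]
        exact fun γ hγ => hxO γ hγ))) ?_
  intro y hy
  simp only [Set.mem_compl_iff, Set.mem_setOf_eq, Set.not_nonempty_iff_eq_empty]
  rw [Set.eq_empty_iff_forall_notMem]
  rintro z ⟨⟨γ, hγS, rfl⟩, hzC⟩
  have hγT : γ ∈ T := by
    refine ⟨hγS, ?_⟩
    have : γ = y * (y⁻¹ * γ * y) * y⁻¹ := by group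
    rw [this]
    exact Set.mul_mem_mul (Set.mul_mem_mul hy.1 hzC) (Set.inv_mem_inv.2 hy.1)
  have h3 := hy.2
  simp only [Set.mem_iInter] at h3
  exact h3 γ hγT hzC

end Aux

/-- Right translation by `g ∈ G` on the right coset space `Γ\G`. -/
def rightTranslate {G : Type*} [Group G] (Γ : Subgroup G) (g : G) :
    Quotient (QuotientGroup.rightRel Γ) → Quotient (QuotientGroup.rightRel Γ) :=
  Quotient.map' (fun x => x * g) (by
    intro a b h
    rw [QuotientGroup.rightRel_apply] at h ⊢
    have e : (b * g) * (a * g)⁻¹ = b * a⁻¹ := by group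
    rw [e]; exact h)

/-- Theorem 3.3.  Let `G` be a locally compact Hausdorff topological
group, `(Γₙ)` a uniformly discrete sequence of cocompact lattices, `Γ_∞` a common
normal subgroup of all the `Γₙ`, and `P n` the invariant Borel probability measure on
`Γₙ\G`.  Then `(Γₙ)` BS-converges to `Γ_∞` iff `(Γₙ)` Plancherel-converges to `Γ_∞`. -/
theorem stmt3 {G : Type*} [Group G] [TopologicalSpace G] [IsTopologicalGroup G]
    [LocallyCompactSpace G] [T2Space G] [MeasurableSpace G] [BorelSpace G]
    (Γ : ℕ → Subgroup G) (Γinf : Subgroup G)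
    (hle : ∀ n, Γinf ≤ Γ n)
    (hnorm : ∀ n, ∀ γ ∈ Γ n, ∀ δ ∈ Γinf, γ * δ * γ⁻¹ ∈ Γinf)
    (hdisc : ∀ n, DiscreteTopology ↥(Γ n))
    (hcocpt : ∀ n, CompactSpace (Quotient (QuotientGroup.rightRel (Γ n))))
    (hud : ∃ U ∈ nhds (1 : G), ∀ (n : ℕ) (x : G),
      ((fun γ => x⁻¹ * γ * x) '' ((Γ n : Set G))) ∩ U = {1})
    (P : ∀ n : ℕ, Measure (Quotient (QuotientGroup.rightRel (Γ n))))
    (hP : ∀ n, IsProbabilityMeasure (P n))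
    (hPinv : ∀ (n : ℕ) (g : G), MeasurePreserving (rightTranslate (Γ n) g) (P n) (P n)) :
    (∀ C : Set G, IsCompact C →
      Tendsto (fun n => P n {q | ∃ x : G, Quotient.mk'' x = q ∧
          (((fun γ => x⁻¹ * γ * x) '' ((Γ n : Set G) \ (Γinf : Set G))) ∩ C).Nonempty})
        atTop (𝓝 0))
    ↔
    (∀ C : Set G, IsCompact C →
      ∀ F : (n : ℕ) → Quotient (QuotientGroup.rightRel (Γ n)) → ℝ≥0∞,
        (∀ (n : ℕ) (x : G), F n (Quotient.mk'' x) =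
          ((((fun γ => x⁻¹ * γ * x) '' ((Γ n : Set G) \ (Γinf : Set G))) ∩ C).encard : ℝ≥0∞)) →
        Tendsto (fun n => ∫⁻ q, F n q ∂(P n)) atTop (𝓝 0)) := by
  classical
  obtain ⟨U, hU, hunif⟩ := hud
  -- notation
  set sN : (C : Set G) → (n : ℕ) → Set (Quotient (QuotientGroup.rightRel (Γ n))) :=
    fun C n => {q | ∃ x : G, Quotient.mk'' x = q ∧
      (((fun γ => x⁻¹ * γ * x) '' ((Γ n : Set G) \ (Γinf : Set G))) ∩ C).Nonempty} with hsN
  constructor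
  · -- BS implies Plancherel
    intro hbs C hC F hF
    obtain ⟨K, hK⟩ := count_bound Γ (fun n => (Γ n : Set G) \ (Γinf : Set G))
      (fun n => Set.diff_subset) hU hunif hC
    have hbsC := hbs C hC
    set c : ℝ≥0∞ := (K : ℝ≥0∞) + 1 with hc
    have hc0 : c ≠ 0 := by simp [hc]
    have hctop : c ≠ ∞ := by
      simp only [hc, Ne, ENNReal.add_eq_top, ENNReal.natCast_ne_top, ENNReal.one_ne_top,
        or_self, not_false_iff]
    have hbound : ∀ n, ∫⁻ q, F n q ∂(P n) ≤ c * (P n) (sN C n) := by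
      intro n
      have hFle : ∀ q, F n q ≤ c := by
        intro q
        obtain ⟨x, rfl⟩ := Quotient.exists_rep q
        rw [show (Quotient.mk _ x : Quotient (QuotientGroup.rightRel (Γ n)))
            = Quotient.mk'' x from rfl, hF n x]
        refine le_trans ?_ (le_add_right le_rfl)
        have h1 := ENat.toENNReal_le.2 (hK n x)
        simpa using h1
      have hFzero : ∀ q ∉ sN C n, F n q = 0 := by
        intro q hq
        obtain ⟨x, rfl⟩ := Quotient.exists_rep q
        rw [show (Quotient.mk _ x : Quotient (QuotientGroup.rightRel (Γ n)))
            = Quotient.mk'' x from rfl, hF n x]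
        have : ¬ (((fun γ => x⁻¹ * γ * x) '' ((Γ n : Set G) \ (Γinf : Set G))) ∩ C).Nonempty :=
          fun hne => hq ⟨x, rfl, hne⟩
        rw [Set.not_nonempty_iff_eq_empty] at this
        simp [this]
      calc ∫⁻ q, F n q ∂(P n) = ∫⁻ q, c * (F n q / c) ∂(P n) := by
            refine lintegral_congr fun q => ?_
            rw [ENNReal.mul_div_cancel hc0 hctop]
        _ = c * ∫⁻ q, F n q / c ∂(P n) := lintegral_const_mul' c _ hctop
        _ ≤ c * (P n) (sN C n) := by
            refine mul_le_mul_right (lintegral_le_meas (fun q => ?_) (fun q hq => ?_)) c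
            · exact le_trans (ENNReal.div_le_div_right (hFle q) c) ENNReal.div_self_le_one
            · rw [hFzero q hq]
              simp
    have hmul : Tendsto (fun n => c * (P n) (sN C n)) atTop (𝓝 0) := by
      have := ENNReal.Tendsto.const_mul hbsC (Or.inr hctop)
      simpa only [mul_zero] using this
    exact tendsto_of_tendsto_of_tendsto_of_le_of_le tendsto_const_nhds hmul
      (fun n => zero_le) hbound
  · -- Plancherel implies BS
    intro hpl C hC
    set f' : (n : ℕ) → G → ℝ≥0∞ := fun n x =>
      ((((fun γ => x⁻¹ * γ * x) '' ((Γ n : Set G) \ (Γinf : Set G))) ∩ C).encard : ℝ≥0∞)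
      with hf'
    have hwd : ∀ n (a b : G), (QuotientGroup.rightRel (Γ n)).r a b → f' n a = f' n b := by
      intro n a b hab
      rw [QuotientGroup.rightRel_apply] at hab
      have h1 := conj_image_eq (Γ n) Γinf (hnorm n) hab a
      have h2 : b * a⁻¹ * a = b := by group
      rw [h2] at h1
      simp only [hf']
      rw [h1]
    set F : (n : ℕ) → Quotient (QuotientGroup.rightRel (Γ n)) → ℝ≥0∞ :=
      fun n => Quotient.lift (f' n) (hwd n) with hFdef
    have hF : ∀ (n : ℕ) (x : G), F n (Quotient.mk'' x) = f' n x := fun n x => rfl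
    have htd := hpl C hC F hF
    -- measurability of the bad set
    have hmeas : ∀ n, MeasurableSet (sN C n) := by
      intro n
      rw [measurableSet_quotient]
      have hpre : Quotient.mk'' ⁻¹' (sN C n)
          = {x : G | (((fun γ => x⁻¹ * γ * x) '' ((Γ n : Set G) \ (Γinf : Set G))) ∩ C).Nonempty} := by
        ext x
        simp only [Set.mem_preimage, hsN, Set.mem_setOf_eq]
        constructor
        · rintro ⟨y, hy, hyA⟩
          have hr : (QuotientGroup.rightRel (Γ n)).r y x := Quotient.eq''.1 hy
          rw [QuotientGroup.rightRel_apply] at hr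
          have h1 := conj_image_eq (Γ n) Γinf (hnorm n) hr y
          have h2 : x * y⁻¹ * y = x := by group
          rw [h2] at h1
          rw [h1]
          exact hyA
        · intro hx
          exact ⟨x, rfl, hx⟩
      rw [hpre]
      exact (closed_bad (Γ n) (hdisc n) _ Set.diff_subset hC).measurableSet
    have hbound : ∀ n, (P n) (sN C n) ≤ ∫⁻ q, F n q ∂(P n) := by
      intro n
      rw [← lintegral_indicator_one (hmeas n)]
      refine lintegral_mono fun q => ?_
      by_cases hq : q ∈ sN C n
      · rw [Set.indicator_of_mem hq]
        obtain ⟨x, rfl, hne⟩ := hq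
        rw [hF n x]
        have h1 := ENat.toENNReal_le.2 (Set.one_le_encard_iff_nonempty.2 hne)
        simpa [hf'] using h1
      · rw [Set.indicator_of_notMem hq]
        exact zero_le
    exact tendsto_of_tendsto_of_tendsto_of_le_of_le tendsto_const_nhds htd
      (fun n => zero_le) hbound
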